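/- Totality (termination) of evaluation for the simply-typed λ-calculus with booleans but without references: every term well-typed in the empty context under the standard typing rules evaluates, under the big-step environment semantics with closures, to a value; i.e., if ∅ ⊢ t : T then there exists a value v with ⟨t, ∅⟩ ⇓ v. -/

import Mathlib

/-- Terms of STLC with booleans (de Bruijn indices). -/
inductive Tm : Type
  | tt : Tm
  | ff : Tm
  | var : ℕ → Tm
  | abs : Tm → Tm
  | app : Tm → Tm → Tm

/-- Types. -/
inductive Ty : Type
  | bool : Ty
  | arrow : Ty → Ty → Ty

/-- Values: booleans and closures over value environments. -/
inductive Val : Type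
  | vtt : Val
  | vff : Val
  | clos : List Val → Tm → Val

/-- Standard STLC typing, with contexts as lists of types. -/
inductive HasType : List Ty → Tm → Ty → Prop
  | tt {Γ} : HasType Γ .tt .bool
  | ff {Γ} : HasType Γ .ff .bool
  | var {Γ n T} : Γ[n]? = some T → HasType Γ (.var n) T
  | abs {Γ t T U} : HasType (T :: Γ) t U → HasType Γ (.abs t) (.arrow T U)
  | app {Γ t₁ t₂ T U} : HasType Γ t₁ (.arrow T U) → HasType Γ t₂ T →
      HasType Γ (.app t₁ t₂) U

/-- Big-step environment semantics with closures. -/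
inductive Eval : List Val → Tm → Val → Prop
  | tt {H} : Eval H .tt .vtt
  | ff {H} : Eval H .ff .vff
  | var {H n v} : H[n]? = some v → Eval H (.var n) v
  | abs {H t} : Eval H (.abs t) (.clos H t)
  | app {H t₁ t₂ H' t v v'} :
      Eval H t₁ (.clos H' t) → Eval H t₂ v → Eval (v :: H') t v' →
      Eval H (.app t₁ t₂) v'

/-- Logical relation: semantic interpretation of types. -/
def VRel : Ty → Val → Prop
  | .bool, v => v = .vtt ∨ v = .vff
  | .arrow T U, v => ∃ H t, v = .clos H t ∧
      ∀ a, VRel T a → ∃ r, Eval (a :: H) t r ∧ VRel U r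

def GRel : List Ty → List Val → Prop
  | Γ, H => ∀ (n : ℕ) T, Γ[n]? = some T → ∃ v, H[n]? = some v ∧ VRel T v

theorem fundamental {Γ t T} (h : HasType Γ t T) :
    ∀ H, GRel Γ H → ∃ v, Eval H t v ∧ VRel T v := by
  induction h with
  | tt => exact fun H _ => ⟨.vtt, .tt, Or.inl rfl⟩
  | ff => exact fun H _ => ⟨.vff, .ff, Or.inr rfl⟩
  | var hn =>
      intro H hG
      obtain ⟨v, hv, hV⟩ := hG _ _ hn
      exact ⟨v, .var hv, hV⟩
  | abs _ ih =>
      intro H hG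
      refine ⟨.clos H _, .abs, _, _, rfl, fun a ha => ?_⟩
      refine ih (a :: H) (fun n T hT => ?_)
      cases n with
      | zero => exact ⟨a, rfl, by cases hT; exact ha⟩
      | succ n => exact hG n T hT
  | app _ _ ih1 ih2 =>
      intro H hG
      obtain ⟨f, hf, Hf, tf, rfl, hfun⟩ := ih1 H hG
      obtain ⟨a, ha, hVa⟩ := ih2 H hG
      obtain ⟨r, hr, hVr⟩ := hfun a hVa
      exact ⟨r, .app hf ha hr, hVr⟩

/-- Totality: every closed well-typed term evaluates to a value. -/
theorem stlc_termination (t : Tm) (T : Ty) (h : HasType [] t T) :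
    ∃ v, Eval [] t v := by
  obtain ⟨v, hv, _⟩ := fundamental h [] (fun n T hT => by simp at hT)
  exact ⟨v, hv⟩
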